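/- Let S be a finite set of points in the plane such that any two distinct points of S are at distance at least 1, and let R be an a × b axis-parallel rectangle with a, b ≥ 1/2. Then |S ∩ R| ≤ 20·a·b. -/

import Mathlib

set_option maxHeartbeats 1000000 in
theorem stmt_14 (S : Finset (EuclideanSpace ℝ (Fin 2)))
    (hS : ∀ P ∈ S, ∀ Q ∈ S, P ≠ Q → 1 ≤ dist P Q)
    (a b x₀ y₀ : ℝ) (ha : 1/2 ≤ a) (hb : 1/2 ≤ b)
    (R : Set (EuclideanSpace ℝ (Fin 2)))
    (hR : R = {p | x₀ ≤ p 0 ∧ p 0 ≤ x₀ + a ∧ y₀ ≤ p 1 ∧ p 1 ≤ y₀ + b}) :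
    ((↑S ∩ R : Set (EuclideanSpace ℝ (Fin 2))).ncard : ℝ) ≤ 20 * a * b := by
  classical
  subst hR
  have sqrt2_pos : (0:ℝ) < Real.sqrt 2 := by positivity
  have sqrt2_le : Real.sqrt 2 ≤ 2 := by
    nlinarith [Real.sq_sqrt (by norm_num : (2:ℝ) ≥ 0), Real.sqrt_nonneg 2]
  have sqrt2_ge : (1:ℝ) ≤ Real.sqrt 2 := by
    nlinarith [Real.sq_sqrt (by norm_num : (2:ℝ) ≥ 0), Real.sqrt_nonneg 2]
  set T := S.filter (fun p => x₀ ≤ p 0 ∧ p 0 ≤ x₀ + a ∧ y₀ ≤ p 1 ∧ p 1 ≤ y₀ + b) with hT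
  have hset : (↑S ∩ {p : EuclideanSpace ℝ (Fin 2) |
      x₀ ≤ p 0 ∧ p 0 ≤ x₀ + a ∧ y₀ ≤ p 1 ∧ p 1 ≤ y₀ + b}) = (T : Set _) := by
    ext p
    simp [hT, Set.mem_setOf_eq, and_assoc]
  rw [hset, Set.ncard_coe_finset]
  set na := ⌊Real.sqrt 2 * a⌋ with hna
  set nb := ⌊Real.sqrt 2 * b⌋ with hnb
  have hcard : T.card ≤ (Finset.Icc (0:ℤ) na ×ˢ Finset.Icc (0:ℤ) nb).card := by
    apply Finset.card_le_card_of_injOn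
      (fun p => (⌊Real.sqrt 2 * (p 0 - x₀)⌋, ⌊Real.sqrt 2 * (p 1 - y₀)⌋))
    · intro p hp
      simp only [hT, Finset.mem_coe, Finset.mem_filter] at hp
      obtain ⟨hpS, h1, h2, h3, h4⟩ := hp
      simp only [Finset.mem_coe, Finset.mem_product, Finset.mem_Icc]
      refine ⟨⟨Int.floor_nonneg.2 (by nlinarith), ?_⟩,
              Int.floor_nonneg.2 (by nlinarith), ?_⟩
      · exact Int.floor_le_floor (by nlinarith)
      · exact Int.floor_le_floor (by nlinarith)
    · intro p hp q hq hpq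
      by_contra hne
      simp only [hT, Finset.mem_coe, Finset.mem_filter] at hp hq
      have hd := hS p hp.1 q hq.1 hne
      have h1 : |Real.sqrt 2 * (p 0 - x₀) - Real.sqrt 2 * (q 0 - x₀)| < 1 :=
        Int.abs_sub_lt_one_of_floor_eq_floor (congrArg Prod.fst hpq)
      have h2 : |Real.sqrt 2 * (p 1 - y₀) - Real.sqrt 2 * (q 1 - y₀)| < 1 :=
        Int.abs_sub_lt_one_of_floor_eq_floor (congrArg Prod.snd hpq)
      have e1 : Real.sqrt 2 * (p 0 - x₀) - Real.sqrt 2 * (q 0 - x₀)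
          = Real.sqrt 2 * (p 0 - q 0) := by ring
      have e2 : Real.sqrt 2 * (p 1 - y₀) - Real.sqrt 2 * (q 1 - y₀)
          = Real.sqrt 2 * (p 1 - q 1) := by ring
      rw [e1] at h1
      rw [e2] at h2
      have hx : (p 0 - q 0)^2 < 1/2 := by
        have := abs_lt.mp h1
        nlinarith [Real.sq_sqrt (by norm_num : (2:ℝ) ≥ 0)]
      have hy : (p 1 - q 1)^2 < 1/2 := by
        have := abs_lt.mp h2
        nlinarith [Real.sq_sqrt (by norm_num : (2:ℝ) ≥ 0)]
      have hdist : dist p q = Real.sqrt ((p 0 - q 0)^2 + (p 1 - q 1)^2) := by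
        rw [EuclideanSpace.dist_eq, Fin.sum_univ_two]
        simp [Real.dist_eq, sq_abs]
      rw [hdist] at hd
      have hnn : (0:ℝ) ≤ (p 0 - q 0)^2 + (p 1 - q 1)^2 := by positivity
      have := Real.sq_sqrt hnn
      nlinarith [Real.sqrt_nonneg ((p 0 - q 0)^2 + (p 1 - q 1)^2)]
  have hna0 : 0 ≤ na := Int.floor_nonneg.2 (by nlinarith)
  have hnb0 : 0 ≤ nb := Int.floor_nonneg.2 (by nlinarith)
  have hcard2 : (Finset.Icc (0:ℤ) na ×ˢ Finset.Icc (0:ℤ) nb).card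
      = (na + 1).toNat * (nb + 1).toNat := by
    rw [Finset.card_product, Int.card_Icc, Int.card_Icc]
    norm_num
  have hT_le : (T.card : ℝ) ≤ ((na:ℝ) + 1) * ((nb:ℝ) + 1) := by
    have := hcard
    rw [hcard2] at this
    have h1 : ((na + 1).toNat : ℝ) = (na:ℝ) + 1 := by
      have h := Int.toNat_of_nonneg (show (0:ℤ) ≤ na + 1 by omega)
      exact_mod_cast congrArg (Int.cast : ℤ → ℝ) h
    have h2 : ((nb + 1).toNat : ℝ) = (nb:ℝ) + 1 := by
      have h := Int.toNat_of_nonneg (show (0:ℤ) ≤ nb + 1 by omega)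
      exact_mod_cast congrArg (Int.cast : ℤ → ℝ) h
    calc (T.card : ℝ) ≤ ((na + 1).toNat * (nb + 1).toNat : ℕ) := by exact_mod_cast this
    _ = ((na:ℝ) + 1) * ((nb:ℝ) + 1) := by push_cast [h1, h2]; ring
  have hA : (na:ℝ) + 1 ≤ 4 * a := by
    have := Int.floor_le (Real.sqrt 2 * a)
    nlinarith
  have hB : (nb:ℝ) + 1 ≤ 4 * b := by
    have := Int.floor_le (Real.sqrt 2 * b)
    nlinarith
  have hA0 : (0:ℝ) ≤ (na:ℝ) + 1 := by
    have : (0:ℝ) ≤ (na:ℝ) := by exact_mod_cast hna0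
    linarith
  have hB0 : (0:ℝ) ≤ (nb:ℝ) + 1 := by
    have : (0:ℝ) ≤ (nb:ℝ) := by exact_mod_cast hnb0
    linarith
  have ha0 : (0:ℝ) ≤ a := by linarith
  have hb0 : (0:ℝ) ≤ b := by linarith
  calc (T.card : ℝ) ≤ ((na:ℝ) + 1) * ((nb:ℝ) + 1) := hT_le
    _ ≤ (4 * a) * (4 * b) := mul_le_mul hA hB hB0 (by linarith)
    _ ≤ 20 * a * b := by nlinarith [mul_nonneg ha0 hb0]
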